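/- If two token configurations on a path are each ⟦−3,3⟧-stable and we define y(v) as the sum of the token counts of both configurations at node v, then for any two nodes u, w with |y(u) − y(w)| ≥ 3, the distance between u and w is at least 4; in particular, adjacent nodes differ by at most 2, and any pair with difference exactly 2 admits a local correction, so a ⟦−1,1⟧-stable (fully balanced, |y(u)−y(v)| ≤ 1 on edges) configuration can be obtained by changing loads only within constant distance. -/
import Mathlib


/-- A token configuration on the path (given by per-node token counts `z`) is
`k`-stable if every token at slot `(v,i)` with `i > 1` has a token at
`(v+k, i−1)`. -/
def kStable (z : ℤ → ℕ) (k : ℤ) : Prop :=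
  ∀ (v : ℤ) (i : ℕ), 2 ≤ i → i ≤ z v → i - 1 ≤ z (v + k)

/-- Balancing an approximately Lipschitz function by a local flow. -/
theorem balance_aux (Y : ℤ → ℤ) (hY0 : ∀ v, 0 ≤ Y v)
    (near : ∀ u w : ℤ, -3 ≤ w - u → w - u ≤ 3 → Y u ≤ Y w + 2) :
    ∃ (y' : ℤ → ℕ) (f : ℤ → ℤ),
      (∀ v : ℤ, (y' v : ℤ) = Y v + f (v - 1) - f v) ∧
      (∀ v : ℤ, |f v| ≤ 1) ∧
      (∀ v : ℤ, |(y' v : ℤ) - (y' (v + 1) : ℤ)| ≤ 1) := by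
  classical
  set f : ℤ → ℤ := fun v =>
    if 2 ≤ Y (v + 1) - Y v then -1
    else if 2 ≤ Y v - Y (v + 1) ∧ Y v - Y (v - 1) < 2 then 1 else 0 with hf
  have spec : ∀ v : ℤ,
      (f v = -1 ∧ 2 ≤ Y (v + 1) - Y v) ∨
      (f v = 1 ∧ 2 ≤ Y v - Y (v + 1) ∧ Y v - Y (v - 1) < 2) ∨
      (f v = 0 ∧ Y (v + 1) - Y v < 2 ∧
        (Y v - Y (v + 1) < 2 ∨ 2 ≤ Y v - Y (v - 1))) := by
    intro v
    simp only [hf]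
    split_ifs with h1 h2
    · exact Or.inl ⟨rfl, h1⟩
    · exact Or.inr (Or.inl ⟨rfl, h2⟩)
    · push_neg at h1 h2
      refine Or.inr (Or.inr ⟨rfl, by omega, ?_⟩)
      by_cases hc : Y v - Y (v + 1) < 2
      · exact Or.inl hc
      · exact Or.inr (h2 (by omega))
  have hnn : ∀ v : ℤ, 0 ≤ Y v + f (v - 1) - f v := by
    intro v
    have s0 := spec v
    have s1 := spec (v - 1)
    rw [show v - 1 + 1 = v from by ring] at s1
    have n1 := hY0 (v - 1)
    have n2 := hY0 (v + 1)
    have n0 := hY0 v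
    rcases s0 with ⟨e, _⟩ | ⟨e, p, _⟩ | ⟨e, _, _⟩ <;>
      rcases s1 with ⟨e', p'⟩ | ⟨e', _, _⟩ | ⟨e', _, _⟩ <;> omega
  refine ⟨fun v => (Y v + f (v - 1) - f v).toNat, f,
    fun v => Int.toNat_of_nonneg (hnn v), ?_, ?_⟩
  · intro v
    rcases spec v with ⟨e, _⟩ | ⟨e, _, _⟩ | ⟨e, _, _⟩ <;> rw [e] <;> norm_num
  · intro v
    simp only [Int.toNat_of_nonneg (hnn v), Int.toNat_of_nonneg (hnn (v + 1))]
    rw [show v + 1 - 1 = v from by ring, abs_le]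
    have s1 := spec (v - 1)
    rw [show v - 1 + 1 = v from by ring, show v - 1 - 1 = v - 2 from by ring] at s1
    have s0 := spec v
    have s2 := spec (v + 1)
    rw [show v + 1 - 1 = v from by ring, show v + 1 + 1 = v + 2 from by ring] at s2
    have q1 := near (v - 2) (v - 1) (by omega) (by omega)
    have q2 := near (v - 2) v (by omega) (by omega)
    have q3 := near (v - 2) (v + 1) (by omega) (by omega)
    have q4 := near (v - 1) v (by omega) (by omega)
    have q5 := near (v - 1) (v + 1) (by omega) (by omega)
    have q6 := near (v - 1) (v + 2) (by omega) (by omega)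
    have q7 := near v (v + 1) (by omega) (by omega)
    have q8 := near v (v + 2) (by omega) (by omega)
    have q9 := near (v + 1) (v + 2) (by omega) (by omega)
    have r1 := near (v - 1) (v - 2) (by omega) (by omega)
    have r2 := near v (v - 2) (by omega) (by omega)
    have r3 := near (v + 1) (v - 2) (by omega) (by omega)
    have r4 := near v (v - 1) (by omega) (by omega)
    have r5 := near (v + 1) (v - 1) (by omega) (by omega)
    have r6 := near (v + 2) (v - 1) (by omega) (by omega)
    have r7 := near (v + 1) v (by omega) (by omega)
    have r8 := near (v + 2) v (by omega) (by omega)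
    have r9 := near (v + 2) (v + 1) (by omega) (by omega)
    rcases s0 with ⟨e0, p0⟩ | ⟨e0, p0, p0'⟩ | ⟨e0, p0, p0' | p0'⟩ <;>
      rcases s1 with ⟨e1, p1⟩ | ⟨e1, p1, p1'⟩ | ⟨e1, p1, p1' | p1'⟩ <;>
        rcases s2 with ⟨e2, p2⟩ | ⟨e2, p2, p2'⟩ | ⟨e2, p2, p2' | p2'⟩ <;> omega

/-- Summing two `⟦−3,3⟧`-stable configurations: a load difference of at least
`3` forces distance at least `4`; in particular adjacent loads differ by at
most `2`, and a fully balanced configuration (adjacent loads differing by at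
most `1`) is obtained by moving at most one unit across each edge. -/
theorem stmt15 (z₁ z₂ : ℤ → ℕ)
    (h₁ : ∀ k ∈ Finset.Icc (-3 : ℤ) 3, kStable z₁ k)
    (h₂ : ∀ k ∈ Finset.Icc (-3 : ℤ) 3, kStable z₂ k) :
    (∀ u w : ℤ, 3 ≤ |((z₁ u + z₂ u : ℕ) : ℤ) - ((z₁ w + z₂ w : ℕ) : ℤ)| → 4 ≤ |u - w|) ∧
    (∀ v : ℤ, |((z₁ v + z₂ v : ℕ) : ℤ) - ((z₁ (v + 1) + z₂ (v + 1) : ℕ) : ℤ)| ≤ 2) ∧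
    (∃ (y' : ℤ → ℕ) (f : ℤ → ℤ),
      (∀ v : ℤ, (y' v : ℤ) = ((z₁ v + z₂ v : ℕ) : ℤ) + f (v - 1) - f v) ∧
      (∀ v : ℤ, |f v| ≤ 1) ∧
      (∀ v : ℤ, |(y' v : ℤ) - (y' (v + 1) : ℤ)| ≤ 1)) := by
  have key : ∀ (z : ℤ → ℕ), (∀ k ∈ Finset.Icc (-3 : ℤ) 3, kStable z k) →
      ∀ (v k : ℤ), -3 ≤ k → k ≤ 3 → (z v : ℤ) ≤ (z (v + k) : ℤ) + 1 := by
    intro z hz v k hk1 hk2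
    have hk : k ∈ Finset.Icc (-3 : ℤ) 3 := Finset.mem_Icc.mpr ⟨hk1, hk2⟩
    by_cases h : 2 ≤ z v
    · have := hz k hk v (z v) h le_rfl
      omega
    · omega
  have near' : ∀ u w : ℤ, -3 ≤ w - u → w - u ≤ 3 →
      ((z₁ u + z₂ u : ℕ) : ℤ) ≤ ((z₁ w + z₂ w : ℕ) : ℤ) + 2 := by
    intro u w hb1 hb2
    have e : u + (w - u) = w := by ring
    have a1 := key z₁ h₁ u (w - u) hb1 hb2
    have a2 := key z₂ h₂ u (w - u) hb1 hb2
    rw [e] at a1 a2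
    push_cast at a1 a2 ⊢
    omega
  refine ⟨?_, ?_, ?_⟩
  · intro u w h
    by_contra hc
    push_neg at hc
    have b1 := le_abs_self (u - w)
    have b2 := neg_abs_le (u - w)
    have d1 := near' u w (by omega) (by omega)
    have d2 := near' w u (by omega) (by omega)
    have h2 : |((z₁ u + z₂ u : ℕ) : ℤ) - ((z₁ w + z₂ w : ℕ) : ℤ)| ≤ 2 :=
      abs_le.mpr ⟨by omega, by omega⟩
    omega
  · intro v
    have d1 := near' v (v + 1) (by omega) (by omega)
    have d2 := near' (v + 1) v (by omega) (by omega)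
    exact abs_le.mpr ⟨by omega, by omega⟩
  · exact balance_aux (fun v => ((z₁ v + z₂ v : ℕ) : ℤ)) (fun v => by positivity) near'
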